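/- Let x be a nonzero real number and c > 0. For each θ with 0 < θ < π/2, the integral I(θ) = (1/2π) · ∫_{-∞}^{∞} (2π|x|)^{-(c+it)} · exp( i·(c+it)·θ·sgn(x) ) · Γ(c+it) dt converges absolutely, and I(θ) tends to exp(2πix) as θ tends to π/2 from below. -/

import Mathlib

open MeasureTheory Set Complex Filter Topology

lemma intOn {a b : ℝ} (ha : -1 < a) (hb : 0 < b) :
    IntegrableOn (fun t : ℝ => t ^ a * Real.exp (-(b * t))) (Ioi 0) := by
  have h := Real.GammaIntegral_convergent (by linarith : (0:ℝ) < a + 1)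
  have h2 : IntegrableOn (fun t : ℝ => Real.exp (-(b*t)) * (b*t) ^ a) (Ioi 0) := by
    have := (integrableOn_Ioi_comp_mul_left_iff
      (fun t : ℝ => Real.exp (-t) * t ^ a) 0 hb).mpr (by simpa [add_sub_cancel_right] using h)
    simpa [mul_zero] using this
  refine IntegrableOn.congr_fun (h2.const_mul (b ^ a)⁻¹) (fun t ht => ?_) measurableSet_Ioi
  rw [mem_Ioi] at ht
  rw [Real.mul_rpow hb.le ht.le]
  field_simp [(Real.rpow_pos_of_pos hb a).ne']

lemma meas_aux (s : ℂ) (y : ℂ) : AEStronglyMeasurable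
    (fun t : ℝ => (t:ℂ) ^ (s - 1) * Complex.exp (-(y * t))) (volume.restrict (Ioi 0)) := by
  refine ContinuousOn.aestronglyMeasurable ?_ measurableSet_Ioi
  refine ContinuousOn.mul (continuousOn_of_forall_continuousAt fun x hx =>
    continuousAt_ofReal_cpow_const x (s-1) (Or.inr (ne_of_gt hx))) ?_
  exact (Complex.continuous_exp.comp ((continuous_const.mul continuous_ofReal).neg)).continuousOn

lemma intOnC {s : ℂ} (hs : 0 < s.re) {y : ℂ} (hy : 0 < y.re) :
    IntegrableOn (fun t : ℝ => (t:ℂ) ^ (s - 1) * Complex.exp (-(y * t))) (Ioi 0) := by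
  refine Integrable.mono' (intOn (by linarith : (-1:ℝ) < s.re - 1) hy) (meas_aux s y) ?_
  refine (ae_restrict_iff' measurableSet_Ioi).mpr ?_
  filter_upwards with t ht
  rw [norm_mul, Complex.norm_exp,
    Complex.norm_cpow_eq_rpow_re_of_pos ht]
  simp [mul_comm]

lemma key {s : ℂ} (hs : 0 < s.re) :
    Set.EqOn (fun y => ∫ t in Ioi (0:ℝ), (t:ℂ) ^ (s - 1) * Complex.exp (-(y * t)))
      (fun y => y ^ (-s) * Complex.Gamma s) {y : ℂ | 0 < y.re} := by
  set U : Set ℂ := {y : ℂ | 0 < y.re} with hUdef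
  have hU : IsOpen U := isOpen_lt continuous_const Complex.continuous_re
  have hFdiff : DifferentiableOn ℂ
      (fun y => ∫ t in Ioi (0:ℝ), (t:ℂ) ^ (s - 1) * Complex.exp (-(y * t))) U := by
    intro y₀ hy₀
    have hre : 0 < y₀.re := hy₀
    set ε := y₀.re / 2 with hε
    have hεpos : 0 < ε := by positivity
    have hball : ∀ y ∈ Metric.ball y₀ ε, ε < y.re := by
      intro y hy
      rw [Metric.mem_ball, dist_eq_norm] at hy
      have := Complex.abs_re_le_norm (y - y₀)
      rw [Complex.sub_re] at this
      have : |y.re - y₀.re| ≤ ‖y - y₀‖ := this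
      have := abs_lt.mp (lt_of_le_of_lt this hy)
      simp only [hε] at *
      linarith [this.1]
    have main := hasDerivAt_integral_of_dominated_loc_of_deriv_le (μ := volume.restrict (Ioi 0))
      (F := fun y (t : ℝ) => (t:ℂ) ^ (s - 1) * Complex.exp (-(y * t)))
      (F' := fun y (t : ℝ) => (t:ℂ) ^ (s - 1) * (Complex.exp (-(y * t)) * (-(t:ℂ))))
      (bound := fun t : ℝ => t ^ s.re * Real.exp (-(ε * t)))
      (Metric.ball_mem_nhds y₀ hεpos) (Eventually.of_forall fun y => meas_aux s y)
      (intOnC hs hre) ?_ ?_ ?_ ?_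
    · exact (main.2.differentiableAt).differentiableWithinAt
    · -- measurability of F'
      refine ContinuousOn.aestronglyMeasurable ?_ measurableSet_Ioi
      refine ContinuousOn.mul (continuousOn_of_forall_continuousAt fun x hx =>
        continuousAt_ofReal_cpow_const x (s-1) (Or.inr (ne_of_gt hx))) ?_
      exact ((Complex.continuous_exp.comp ((continuous_const.mul continuous_ofReal).neg)).mul
        continuous_ofReal.neg).continuousOn
    · -- bound
      refine (ae_restrict_iff' measurableSet_Ioi).mpr ?_
      filter_upwards with t ht
      intro y hy
      rw [norm_mul, norm_mul,
        Complex.norm_cpow_eq_rpow_re_of_pos ht, Complex.norm_exp]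
      have h1 : (-(y * (t:ℂ))).re = -(y.re * t) := by simp
      rw [h1]
      have h2 : ‖(-(t:ℂ))‖ = t := by
        rw [norm_neg, Complex.norm_real, Real.norm_eq_abs, abs_of_pos ht]
      rw [h2]
      have h3 : t ^ (s-1).re * (Real.exp (-(y.re * t)) * t) =
          t ^ s.re * Real.exp (-(y.re * t)) := by
        rw [Complex.sub_re, Complex.one_re, mul_comm (Real.exp _) t, ← mul_assoc,
          ← Real.rpow_add_one (ne_of_gt ht), sub_add_cancel]
      rw [h3]
      refine mul_le_mul_of_nonneg_left ?_ (Real.rpow_nonneg ht.le _)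
      exact Real.exp_le_exp.mpr (by nlinarith [(hball y hy).le, (show (0:ℝ) < t from ht).le])
    · exact intOn (by linarith) hεpos
    · -- differentiability pointwise
      refine (ae_restrict_iff' measurableSet_Ioi).mpr ?_
      filter_upwards with t ht
      intro y hy
      have h1 : HasDerivAt (fun y : ℂ => -(y * (t:ℂ))) (-(t:ℂ)) y :=
        (hasDerivAt_mul_const (t:ℂ)).neg
      exact ((h1.cexp).const_mul _)
  have hGdiff : DifferentiableOn ℂ (fun y : ℂ => y ^ (-s) * Complex.Gamma s) U := by
    intro y hy
    refine DifferentiableAt.differentiableWithinAt ?_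
    refine (differentiableAt_id.cpow (differentiableAt_const (-s)) ?_).mul_const _
    exact Or.inl hy
  have hpre : IsPreconnected U := (convex_halfSpace_re_gt 0).isPreconnected
  have h1U : (1:ℂ) ∈ U := by simp [hUdef]
  refine AnalyticOnNhd.eqOn_of_preconnected_of_frequently_eq
    (hFdiff.analyticOnNhd hU) (hGdiff.analyticOnNhd hU) hpre h1U ?_
  have hseq : Tendsto (fun n : ℕ => ((1 + ((n:ℝ)+1)⁻¹ : ℝ) : ℂ)) atTop (𝓝[≠] (1:ℂ)) := by
    rw [tendsto_nhdsWithin_iff]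
    constructor
    · have : Tendsto (fun n : ℕ => (1 + ((n:ℝ)+1)⁻¹ : ℝ)) atTop (𝓝 1) := by
        have := tendsto_one_div_add_atTop_nhds_zero_nat (𝕜 := ℝ)
        simpa using tendsto_const_nhds.add (this.congr fun n => by rw [one_div])
      have := (Complex.continuous_ofReal.tendsto 1).comp this
      simpa [Function.comp_def] using this
    · filter_upwards with n
      simp only [Set.mem_compl_iff, Set.mem_singleton_iff]
      intro h
      have : (1 + ((n:ℝ)+1)⁻¹ : ℝ) = 1 := by exact_mod_cast h
      nlinarith [inv_pos.mpr (by positivity : (0:ℝ) < (n:ℝ)+1), this]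
  refine hseq.frequently (Frequently.of_forall fun n => ?_)
  have hr : (0:ℝ) < 1 + ((n:ℝ)+1)⁻¹ := by positivity
  set r : ℝ := 1 + ((n:ℝ)+1)⁻¹
  have := Complex.integral_cpow_mul_exp_neg_mul_Ioi hs hr
  rw [this]
  congr 1
  rw [one_div, ← Complex.ofReal_inv, Complex.cpow_neg]
  rw [← Complex.inv_cpow, Complex.ofReal_inv]
  rw [Complex.arg_ofReal_of_nonneg hr.le]
  exact Real.pi_ne_zero.symm

lemma gamma_bound {c : ℝ} (hc : 0 < c) {θ : ℝ} (hθ : 0 < θ) (hθ2 : θ < Real.pi / 2) (t : ℝ) :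
    ‖Complex.Gamma ((c:ℂ) + Complex.I * t)‖ ≤
      (1 / Real.cos θ) ^ c * Real.Gamma c * Real.exp (-(θ * |t|)) := by
  have hcos : 0 < Real.cos θ := Real.cos_pos_of_mem_Ioo
    ⟨by linarith [Real.pi_pos], hθ2⟩
  set ε : ℝ := if 0 ≤ t then 1 else -1 with hεdef
  have hεt : ε * t = |t| := by
    rcases le_or_gt 0 t with h | h
    · simp [hεdef, h, _root_.abs_of_nonneg h]
    · simp [hεdef, not_le.mpr h, abs_of_neg h]
  have hεcases : ε = 1 ∨ ε = -1 := by
    rcases le_or_gt 0 t with h | h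
    · left; simp [hεdef, h]
    · right; simp [hεdef, not_le.mpr h]
  set ψ : ℝ := θ * ε with hψdef
  have hcosψ : Real.cos ψ = Real.cos θ := by
    rcases hεcases with h | h <;> simp [hψdef, h]
  have hψmem : ψ ∈ Ioc (-Real.pi) Real.pi := by
    rcases hεcases with h | h <;>
      constructor <;> simp [hψdef, h] <;> nlinarith [Real.pi_pos]
  set y : ℂ := Complex.exp ((ψ:ℂ) * Complex.I) with hydef
  have hyre : 0 < y.re := by
    rw [hydef, Complex.exp_ofReal_mul_I_re, hcosψ]; exact hcos
  have hyne : y ≠ 0 := Complex.exp_ne_zero _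
  have habs : ‖y‖ = 1 := by
    rw [hydef, Complex.norm_exp]; simp
  have harg : y.arg = ψ := by
    rw [hydef, Complex.exp_mul_I]
    exact Complex.arg_cos_add_sin_mul_I hψmem
  set s : ℂ := (c:ℂ) + Complex.I * t with hsdef
  have hsre : 0 < s.re := by simp [hsdef, hc]
  have hsim : s.im = t := by simp [hsdef]
  have hkey := key hsre (show y ∈ {y : ℂ | 0 < y.re} from hyre)
  simp only at hkey
  have hΓ : Complex.Gamma s =
      y ^ s * ∫ u in Ioi (0:ℝ), (u:ℂ) ^ (s - 1) * Complex.exp (-(y * u)) := by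
    rw [hkey, ← mul_assoc, ← Complex.cpow_add _ _ hyne, add_neg_cancel, Complex.cpow_zero,
      one_mul]
  rw [hΓ, norm_mul]
  have h1 : ‖y ^ s‖ = Real.exp (-(θ * |t|)) := by
    rw [Complex.norm_cpow_of_ne_zero hyne, habs, harg, Real.one_rpow, hsim]
    rw [show ψ * t = θ * |t| by rw [hψdef, mul_assoc, hεt]]
    rw [Real.exp_neg, one_div]
  have h2 : ‖∫ u in Ioi (0:ℝ), (u:ℂ) ^ (s - 1) * Complex.exp (-(y * u))‖ ≤
      (1 / Real.cos θ) ^ c * Real.Gamma c := by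
    refine le_trans (norm_integral_le_integral_norm _) ?_
    have heq : ∀ u ∈ Ioi (0:ℝ), ‖(u:ℂ) ^ (s - 1) * Complex.exp (-(y * u))‖ =
        u ^ (c - 1) * Real.exp (-(Real.cos θ * u)) := by
      intro u hu
      rw [norm_mul,
        Complex.norm_cpow_eq_rpow_re_of_pos hu, Complex.norm_exp]
      have : (-(y * (u:ℂ))).re = -(Real.cos θ * u) := by
        simp [hydef, Complex.exp_ofReal_mul_I_re, hcosψ]
      rw [this]
      congr 2
      simp [hsdef]
    rw [setIntegral_congr_fun measurableSet_Ioi heq]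
    rw [Real.integral_rpow_mul_exp_neg_mul_Ioi hc hcos]
  rw [h1, mul_comm ((1 / Real.cos θ) ^ c * Real.Gamma c) (Real.exp _)]
  exact mul_le_mul_of_nonneg_left h2 (Real.exp_pos _).le

lemma int_exp_abs {a : ℝ} (ha : 0 < a) :
    Integrable (fun t : ℝ => Real.exp (-(a * |t|))) := by
  rw [← integrableOn_univ, ← @Iio_union_Ici _ _ (0 : ℝ), integrableOn_union,
    integrableOn_Ici_iff_integrableOn_Ioi]
  have hIoi : IntegrableOn (fun t : ℝ => Real.exp (-(a * |t|))) (Ioi 0) := by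
    refine (exp_neg_integrableOn_Ioi 0 ha).congr_fun (fun t ht => ?_) measurableSet_Ioi
    beta_reduce
    rw [neg_mul, abs_of_pos ht]
  refine ⟨?_, hIoi⟩
  rw [← (Measure.measurePreserving_neg (volume : Measure ℝ)).integrableOn_comp_preimage
      (Homeomorph.neg ℝ).measurableEmbedding]
  simp only [Function.comp_def, abs_neg, neg_preimage, neg_Iio, neg_zero]
  exact hIoi

lemma vert_int {y : ℂ} (hy : 0 < y.re) {c : ℝ} (hc : 0 < c) :
    Integrable (fun t : ℝ =>
      y ^ (-((c:ℂ) + Complex.I * t)) * Complex.Gamma ((c:ℂ) + Complex.I * t)) := by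
  have hyne : y ≠ 0 := by
    intro h; rw [h] at hy; simp at hy
  have hargabs : |y.arg| < Real.pi / 2 :=
    abs_lt.mpr ⟨Complex.neg_pi_div_two_lt_arg_iff.mpr (Or.inl hy),
      Complex.arg_lt_pi_div_two_iff.mpr (Or.inl hy)⟩
  set θ' : ℝ := (|y.arg| + Real.pi / 2) / 2 with hθ'def
  have hθ'0 : 0 < θ' := by
    have := abs_nonneg y.arg
    have := Real.pi_pos
    rw [hθ'def]; linarith
  have hθ'2 : θ' < Real.pi / 2 := by rw [hθ'def]; linarith
  have hargθ' : |y.arg| < θ' := by rw [hθ'def]; linarith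
  set δ : ℝ := θ' - |y.arg| with hδdef
  have hδ : 0 < δ := by rw [hδdef]; linarith
  set C : ℝ := ‖y‖ ^ (-c) * ((1 / Real.cos θ') ^ c * Real.Gamma c) with hCdef
  refine Integrable.mono' (((int_exp_abs hδ).const_mul C)) ?_ ?_
  · -- measurability
    refine Continuous.aestronglyMeasurable ?_
    have hcont1 : Continuous fun t : ℝ => (c:ℂ) + Complex.I * t := by continuity
    have hcont2 : Continuous fun t : ℝ => y ^ (-((c:ℂ) + Complex.I * t)) := by
      have : Continuous fun t : ℝ => Complex.exp (Complex.log y * (-((c:ℂ) + Complex.I * t))) := by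
        continuity
      refine this.congr fun t => ?_
      rw [Complex.cpow_def_of_ne_zero hyne]
    refine hcont2.mul ?_
    refine continuous_iff_continuousAt.mpr fun t => ?_
    refine ContinuousAt.comp ?_ hcont1.continuousAt
    refine (Complex.differentiableAt_Gamma _ fun m => ?_).continuousAt
    intro h
    have : ((c:ℂ) + Complex.I * t).re = (-(m:ℂ)).re := by rw [h]
    simp at this
    have : (0:ℝ) ≤ m := Nat.cast_nonneg m
    linarith
  · filter_upwards with t
    rw [norm_mul,
      Complex.norm_cpow_of_ne_zero hyne]
    have him : (-((c:ℂ) + Complex.I * t)).im = -t := by simp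
    have hre : (-((c:ℂ) + Complex.I * t)).re = -c := by simp
    rw [him, hre]
    have hb := gamma_bound hc hθ'0 hθ'2 t
    have h1 : ‖y‖ ^ (-c) / Real.exp (y.arg * (-t)) =
        ‖y‖ ^ (-c) * Real.exp (y.arg * t) := by
      rw [div_eq_mul_inv, ← Real.exp_neg]; ring_nf
    rw [h1]
    have hexp : Real.exp (y.arg * t) * Real.exp (-(θ' * |t|)) ≤ Real.exp (-(δ * |t|)) := by
      rw [← Real.exp_add, Real.exp_le_exp, hδdef]
      have : y.arg * t ≤ |y.arg| * |t| := le_trans (le_abs_self _) (by rw [abs_mul])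
      nlinarith [abs_nonneg t]
    calc ‖y‖ ^ (-c) * Real.exp (y.arg * t) * ‖Complex.Gamma _‖
        ≤ ‖y‖ ^ (-c) * Real.exp (y.arg * t) *
          ((1 / Real.cos θ') ^ c * Real.Gamma c * Real.exp (-(θ' * |t|))) := by
          refine mul_le_mul_of_nonneg_left hb (by positivity)
      _ = C * (Real.exp (y.arg * t) * Real.exp (-(θ' * |t|))) := by rw [hCdef]; ring
      _ ≤ C * Real.exp (-(δ * |t|)) := by
          refine mul_le_mul_of_nonneg_left hexp ?_
          rw [hCdef]
          have h0 : (0:ℝ) < Real.Gamma c := Real.Gamma_pos_of_pos hc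
          have h2 : (0:ℝ) < Real.cos θ' := Real.cos_pos_of_mem_Ioo ⟨by linarith [Real.pi_pos], hθ'2⟩
          positivity

lemma inv_formula {y : ℂ} (hy : 0 < y.re) {c : ℝ} (hc : 0 < c) :
    (1 / (2 * (Real.pi : ℂ))) * ∫ t : ℝ,
      y ^ (-((c:ℂ) + Complex.I * t)) * Complex.Gamma ((c:ℂ) + Complex.I * t) =
      Complex.exp (-y) := by
  set f : ℝ → ℂ := fun u => Complex.exp (-(y * u)) with hfdef
  have hconv : MellinConvergent f (c:ℂ) := by
    have := intOnC (s := (c:ℂ)) (by simpa using hc) hy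
    refine this.congr_fun (fun t ht => ?_) measurableSet_Ioi
    simp [hfdef, smul_eq_mul]
  have hmel : ∀ t : ℝ, mellin f ((c:ℂ) + (t:ℂ) * Complex.I) =
      y ^ (-((c:ℂ) + (t:ℂ) * Complex.I)) *
        Complex.Gamma ((c:ℂ) + (t:ℂ) * Complex.I) := by
    intro t
    have hsre : (0:ℝ) < ((c:ℂ) + (t:ℂ) * Complex.I).re := by simp [hc]
    have := key hsre (show y ∈ {y : ℂ | 0 < y.re} from hy)
    simp only at this
    rw [← this, mellin]
    refine setIntegral_congr_fun measurableSet_Ioi fun u hu => ?_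
    simp [hfdef, smul_eq_mul]
  have hvert : Complex.VerticalIntegrable (mellin f) c := by
    have := vert_int hy hc
    have h2 : Integrable (fun t : ℝ =>
        y ^ (-((c:ℂ) + (t:ℂ) * Complex.I)) * Complex.Gamma ((c:ℂ) + (t:ℂ) * Complex.I)) := by
      exact this.congr (Eventually.of_forall fun t => by simp only [mul_comm (Complex.I) (_ : ℂ)])
    exact h2.congr (Eventually.of_forall fun t => (hmel t).symm)
  have hcf : ContinuousAt f 1 :=
    (Complex.continuous_exp.comp ((continuous_const.mul Complex.continuous_ofReal).neg)).continuousAt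
  have hinv := mellinInv_mellin_eq c f one_pos hconv hvert hcf
  rw [mellinInv] at hinv
  have h1 : f 1 = Complex.exp (-y) := by simp [hfdef]
  rw [h1] at hinv
  have h2 : (fun t : ℝ => ((1:ℝ):ℂ) ^ (-((c:ℂ) + (t:ℂ) * Complex.I)) •
      mellin f ((c:ℂ) + (t:ℂ) * Complex.I)) = fun t : ℝ =>
      y ^ (-((c:ℂ) + Complex.I * (t:ℂ))) * Complex.Gamma ((c:ℂ) + Complex.I * (t:ℂ)) := by
    funext t
    rw [Complex.ofReal_one, Complex.one_cpow, smul_eq_mul, one_mul, hmel t, mul_comm (t:ℂ)]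
  rw [h2, Complex.real_smul] at hinv
  rw [← hinv]
  norm_num

lemma cpow_split {r ψ : ℝ} (hr : 0 < r) (hψ : |ψ| < Real.pi) (w : ℂ) :
    ((r:ℂ) * Complex.exp ((ψ:ℂ) * Complex.I)) ^ w =
      (r:ℂ) ^ w * Complex.exp ((ψ:ℂ) * Complex.I * w) := by
  have hψmem : ψ ∈ Ioc (-Real.pi) Real.pi := ⟨(abs_lt.mp hψ).1, ((abs_lt.mp hψ).2).le⟩
  set z : ℂ := (r:ℂ) * Complex.exp ((ψ:ℂ) * Complex.I) with hzdef
  have hzne : z ≠ 0 := mul_ne_zero (Complex.ofReal_ne_zero.mpr hr.ne') (Complex.exp_ne_zero _)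
  have habs : ‖z‖ = r := by
    rw [hzdef, norm_mul, Complex.norm_exp, Complex.norm_real, Real.norm_eq_abs, abs_of_pos hr]
    simp
  have harg : z.arg = ψ := by
    rw [hzdef, Complex.arg_real_mul _ hr, Complex.exp_mul_I]
    exact Complex.arg_cos_add_sin_mul_I hψmem
  have hlog : Complex.log z = (Real.log r : ℂ) + (ψ:ℂ) * Complex.I := by
    apply Complex.ext
    · rw [Complex.log_re, habs]; simp
    · rw [Complex.log_im, harg]; simp
  rw [Complex.cpow_def_of_ne_zero hzne, hlog, add_mul, Complex.exp_add]
  congr 1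
  rw [Complex.cpow_def_of_ne_zero (Complex.ofReal_ne_zero.mpr hr.ne'),
    Complex.ofReal_log hr.le]


lemma ptwise {r ε c : ℝ} (hr : 0 < r) (hεabs : |ε| = 1) {θ : ℝ} (h1 : 0 < θ)
    (h2 : θ < Real.pi / 2) :
    (fun t : ℝ => ((r : ℝ) : ℂ) ^ (-((c : ℂ) + Complex.I * (t : ℂ))) *
        Complex.exp (Complex.I * ((c : ℂ) + Complex.I * (t : ℂ)) * (θ : ℂ) * ((ε : ℝ) : ℂ)) *
        Complex.Gamma ((c : ℂ) + Complex.I * (t : ℂ))) =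
    (fun t : ℝ => ((r : ℂ) * Complex.exp (((-(θ * ε) : ℝ) : ℂ) * Complex.I)) ^
        (-((c : ℂ) + Complex.I * (t : ℂ))) *
        Complex.Gamma ((c : ℂ) + Complex.I * (t : ℂ))) := by
  have hψ : |(-(θ * ε) : ℝ)| < Real.pi := by
    rw [abs_neg, abs_mul, hεabs, mul_one, abs_of_pos h1]
    linarith [Real.pi_pos]
  funext t
  rw [cpow_split hr hψ (-((c : ℂ) + Complex.I * (t : ℂ)))]
  congr 2
  push_cast
  ring_nf

lemma yre_pos {r ε : ℝ} (hr : 0 < r) (hεabs : |ε| = 1) {θ : ℝ} (h1 : 0 < θ)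
    (h2 : θ < Real.pi / 2) :
    0 < ((r : ℂ) * Complex.exp (((-(θ * ε) : ℝ) : ℂ) * Complex.I)).re := by
  rw [Complex.re_ofReal_mul, Complex.exp_ofReal_mul_I_re, Real.cos_neg]
  have hcos : Real.cos (θ * ε) = Real.cos θ := by
    rcases abs_eq (le_of_lt one_pos) |>.mp hεabs with h | h <;> simp [h]
  rw [hcos]
  exact mul_pos hr (Real.cos_pos_of_mem_Ioo ⟨by linarith [Real.pi_pos], h2⟩)

lemma part1_aux {r ε c : ℝ} (hr : 0 < r) (hc : 0 < c) (hεabs : |ε| = 1) {θ : ℝ}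
    (h1 : 0 < θ) (h2 : θ < Real.pi / 2) :
    Integrable (fun t : ℝ => ((r : ℝ) : ℂ) ^ (-((c : ℂ) + Complex.I * (t : ℂ))) *
        Complex.exp (Complex.I * ((c : ℂ) + Complex.I * (t : ℂ)) * (θ : ℂ) * ((ε : ℝ) : ℂ)) *
        Complex.Gamma ((c : ℂ) + Complex.I * (t : ℂ))) := by
  rw [ptwise hr hεabs h1 h2]
  exact vert_int (yre_pos hr hεabs h1 h2) hc

lemma part2_aux {r ε c : ℝ} (hr : 0 < r) (hc : 0 < c) (hεabs : |ε| = 1) :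
    Tendsto (fun θ : ℝ => (1 / (2 * (Real.pi : ℂ))) * ∫ t : ℝ,
        ((r : ℝ) : ℂ) ^ (-((c : ℂ) + Complex.I * (t : ℂ))) *
          Complex.exp (Complex.I * ((c : ℂ) + Complex.I * (t : ℂ)) * (θ : ℂ) * ((ε : ℝ) : ℂ)) *
          Complex.Gamma ((c : ℂ) + Complex.I * (t : ℂ)))
      (nhdsWithin (Real.pi / 2) (Set.Iio (Real.pi / 2)))
      (nhds (Complex.exp (-((r:ℂ) *
        Complex.exp (((-(Real.pi / 2 * ε) : ℝ) : ℂ) * Complex.I))))) := by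
  have hgc : Continuous fun θ : ℝ =>
      Complex.exp (-((r:ℂ) * Complex.exp (((-(θ * ε) : ℝ) : ℂ) * Complex.I))) := by
    have cψ : Continuous fun θ : ℝ => ((-(θ * ε) : ℝ) : ℂ) :=
      Complex.continuous_ofReal.comp ((continuous_id.mul continuous_const).neg)
    exact (continuous_const.mul ((cψ.mul continuous_const).cexp)).neg.cexp
  have htend := ((hgc.tendsto (Real.pi / 2)).mono_left
    (nhdsWithin_le_nhds (s := Set.Iio (Real.pi / 2))))
  refine Tendsto.congr' ?_ htend
  filter_upwards [Ioo_mem_nhdsLT_of_mem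
    (⟨by linarith [Real.pi_pos], le_refl _⟩ : Real.pi / 2 ∈ Ioc 0 (Real.pi / 2))] with θ hθ
  rw [← inv_formula (yre_pos hr hεabs hθ.1 hθ.2) hc, ptwise hr hεabs hθ.1 hθ.2]

theorem stmt_6 (x : ℝ) (hx : x ≠ 0) (c : ℝ) (hc : 0 < c) :
    (∀ θ : ℝ, 0 < θ → θ < Real.pi / 2 →
      Integrable (fun t : ℝ =>
        ((2 * Real.pi * |x| : ℝ) : ℂ) ^ (-((c : ℂ) + Complex.I * (t : ℂ))) *
          Complex.exp (Complex.I * ((c : ℂ) + Complex.I * (t : ℂ)) * (θ : ℂ) *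
            ((Real.sign x : ℝ) : ℂ)) *
          Complex.Gamma ((c : ℂ) + Complex.I * (t : ℂ)))) ∧
    Tendsto (fun θ : ℝ =>
        (1 / (2 * (Real.pi : ℂ))) * ∫ t : ℝ,
          ((2 * Real.pi * |x| : ℝ) : ℂ) ^ (-((c : ℂ) + Complex.I * (t : ℂ))) *
            Complex.exp (Complex.I * ((c : ℂ) + Complex.I * (t : ℂ)) * (θ : ℂ) *
              ((Real.sign x : ℝ) : ℂ)) *
            Complex.Gamma ((c : ℂ) + Complex.I * (t : ℂ)))
      (nhdsWithin (Real.pi / 2) (Set.Iio (Real.pi / 2)))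
      (nhds (Complex.exp (2 * (Real.pi : ℂ) * Complex.I * (x : ℂ)))) := by
  have hπ := Real.pi_pos
  have hr : 0 < 2 * Real.pi * |x| := by
    have : 0 < |x| := abs_pos.mpr hx
    positivity
  have hεabs : |Real.sign x| = 1 := by
    rcases hx.lt_or_gt with h | h
    · rw [Real.sign_of_neg h]; norm_num
    · rw [Real.sign_of_pos h]; norm_num
  refine ⟨fun θ h1 h2 => part1_aux hr hc hεabs h1 h2, ?_⟩
  have := part2_aux (r := 2 * Real.pi * |x|) (ε := Real.sign x) (c := c) hr hc hεabs
  have hval : Complex.exp (-(((2 * Real.pi * |x| : ℝ) : ℂ) *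
      Complex.exp (((-(Real.pi / 2 * Real.sign x) : ℝ) : ℂ) * Complex.I))) =
      Complex.exp (2 * (Real.pi : ℂ) * Complex.I * (x : ℂ)) := by
    congr 1
    rcases hx.lt_or_gt with h | h
    · rw [Real.sign_of_neg h, abs_of_neg h]
      have harg : ((-(Real.pi / 2 * (-1:ℝ)) : ℝ) : ℂ) * Complex.I =
          ((Real.pi / 2 : ℝ) : ℂ) * Complex.I := by push_cast; ring
      rw [harg, Complex.exp_mul_I]
      push_cast
      rw [Complex.cos_pi_div_two, Complex.sin_pi_div_two]
      ring
    · rw [Real.sign_of_pos h, abs_of_pos h]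
      have harg : ((-(Real.pi / 2 * (1:ℝ)) : ℝ) : ℂ) * Complex.I =
          -((Real.pi / 2 : ℝ) : ℂ) * Complex.I := by push_cast; ring
      rw [harg, Complex.exp_mul_I]
      push_cast
      rw [Complex.cos_neg, Complex.sin_neg, Complex.cos_pi_div_two, Complex.sin_pi_div_two]
      ring
  rw [hval] at this
  exact this
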